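/- Let f : X → ℝ be convex and differentiable with ‖∇^2 f(x)‖ ≤ L, and let h be twice differentiable with m·I ⪯ ∇²h(x) ⪯ M·I for all x, where 0 < m ≤ M and L > 0. Then the mirror descent update x_{k+1} = argmin_x { ⟨∇f(x_k), x⟩ + (1/η) D_h(x, x_k) } with step size 0 < η ≤ m²/(ML) satisfies f(x_{k+1}) - f(x_k) ≤ -(η/(2M)) ‖∇f(x_k)‖². -/

import Mathlib

open Real RealInnerProductSpace

/-- The Bregman divergence of `h`. -/
noncomputable def bregmanDiv {X : Type*} [NormedAddCommGroup X] [InnerProductSpace ℝ X]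
    [CompleteSpace X] (h : X → ℝ) (x y : X) : ℝ :=
  h x - h y - ⟪gradient h y, x - y⟫


section helpers
variable {X : Type*} [NormedAddCommGroup X] [InnerProductSpace ℝ X] [CompleteSpace X]

lemma aux_fderiv_eq_inner_gradient (f : X → ℝ) {x : X} (hfd : DifferentiableAt ℝ f x) (v : X) :
    fderiv ℝ f x v = ⟪gradient f x, v⟫ := by
  rw [hfd.hasGradientAt.hasFDerivAt.fderiv]
  simp [InnerProductSpace.toDual]

lemma aux_hasDerivAt_comp_line (f : X → ℝ) (hfd : Differentiable ℝ f) (a d : X) (t : ℝ) :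
    HasDerivAt (fun t : ℝ => f (a + t • d)) ⟪gradient f (a + t • d), d⟫ t := by
  have hl : HasDerivAt (fun t : ℝ => a + t • d) d t := by
    simpa using ((hasDerivAt_id t).smul_const d).const_add a
  have := (hfd (a + t • d)).hasFDerivAt.comp_hasDerivAt t hl
  rwa [aux_fderiv_eq_inner_gradient f (hfd _)] at this

lemma aux_hasDerivAt_grad_inner_line (f : X → ℝ) (hfd2 : Differentiable ℝ (gradient f))
    (a d : X) (t : ℝ) :
    HasDerivAt (fun t : ℝ => ⟪gradient f (a + t • d), d⟫)
      ⟪(fderiv ℝ (gradient f) (a + t • d)) d, d⟫ t := by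
  have hl : HasDerivAt (fun t : ℝ => a + t • d) d t := by
    simpa using ((hasDerivAt_id t).smul_const d).const_add a
  have hg : HasDerivAt (fun t : ℝ => gradient f (a + t • d))
      ((fderiv ℝ (gradient f) (a + t • d)) d) t := by
    have := (hfd2 (a + t • d)).hasFDerivAt.comp_hasDerivAt t hl; exact this
  simpa using hg.inner ℝ (hasDerivAt_const t d)

lemma aux_deriv_compare (p q : ℝ → ℝ) (hp : Differentiable ℝ p) (hq : Differentiable ℝ q)
    (h0 : p 0 ≤ q 0) (hle : ∀ t ∈ Set.Icc (0:ℝ) 1, deriv p t ≤ deriv q t) :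
    ∀ t ∈ Set.Icc (0:ℝ) 1, p t ≤ q t := by
  intro t ht
  have hmono : MonotoneOn (fun t => q t - p t) (Set.Icc (0:ℝ) 1) := by
    apply monotoneOn_of_deriv_nonneg (convex_Icc 0 1)
      ((hq.sub hp).continuous.continuousOn) ((hq.sub hp).differentiableOn)
    intro x hx
    have hx' : x ∈ Set.Icc (0:ℝ) 1 := interior_subset hx
    rw [deriv_sub (hq x) (hp x)]
    linarith [hle x hx']
  have := hmono (Set.mem_Icc.2 ⟨le_refl 0, zero_le_one⟩) ht ht.1
  simp only at this
  linarith

lemma aux_taylor_upper (f : X → ℝ) (hfd : Differentiable ℝ f)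
    (hfd2 : Differentiable ℝ (gradient f)) (C : ℝ)
    (hC : ∀ x v : X, ⟪(fderiv ℝ (gradient f) x) v, v⟫ ≤ C * ‖v‖ ^ 2) (a b : X) :
    f b ≤ f a + ⟪gradient f a, b - a⟫ + C / 2 * ‖b - a‖ ^ 2 := by
  set d := b - a with hd
  have hab : a + (1:ℝ) • d = b := by simp [hd]
  -- step 1: gradient inner bound along the line
  have step1 : ∀ t ∈ Set.Icc (0:ℝ) 1,
      ⟪gradient f (a + t • d), d⟫ ≤ ⟪gradient f a, d⟫ + C * ‖d‖ ^ 2 * t := by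
    apply aux_deriv_compare
    · exact fun t => (aux_hasDerivAt_grad_inner_line f hfd2 a d t).differentiableAt
    · exact (differentiable_const _).add ((differentiable_id).const_mul _)
    · simp
    · intro t ht
      rw [(aux_hasDerivAt_grad_inner_line f hfd2 a d t).deriv]
      have : HasDerivAt (fun t : ℝ => ⟪gradient f a, d⟫ + C * ‖d‖ ^ 2 * t)
          (C * ‖d‖ ^ 2) t := by
        exact ((hasDerivAt_const t ⟪gradient f a, d⟫).add
          ((hasDerivAt_id t).const_mul (C * ‖d‖ ^ 2))).congr_deriv (by ring)
      rw [this.deriv]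
      exact hC _ _
  -- step 2: function value bound
  have step2 : ∀ t ∈ Set.Icc (0:ℝ) 1,
      f (a + t • d) ≤ f a + ⟪gradient f a, d⟫ * t + C / 2 * ‖d‖ ^ 2 * t ^ 2 := by
    apply aux_deriv_compare
    · exact fun t => (aux_hasDerivAt_comp_line f hfd a d t).differentiableAt
    · exact ((differentiable_const _).add ((differentiable_id).const_mul _)).add
        ((differentiable_id.pow 2).const_mul _)
    · simp
    · intro t ht
      rw [(aux_hasDerivAt_comp_line f hfd a d t).deriv]
      have hq : HasDerivAt (fun t : ℝ =>
          f a + ⟪gradient f a, d⟫ * t + C / 2 * ‖d‖ ^ 2 * t ^ 2)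
          (⟪gradient f a, d⟫ + C / 2 * ‖d‖ ^ 2 * (2 * t)) t := by
        have h1 : HasDerivAt (fun t : ℝ => ⟪gradient f a, d⟫ * t) ⟪gradient f a, d⟫ t := by
          simpa using (hasDerivAt_id t).const_mul ⟪gradient f a, d⟫
        have h2 : HasDerivAt (fun t : ℝ => C / 2 * ‖d‖ ^ 2 * t ^ 2)
            (C / 2 * ‖d‖ ^ 2 * (2 * t)) t := by
          have := (hasDerivAt_pow 2 t).const_mul (C / 2 * ‖d‖ ^ 2); exact this.congr_deriv (by norm_num)
        exact (((hasDerivAt_const t (f a)).add h1).add h2).congr_deriv (by ring)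
      rw [hq.deriv]
      have := step1 t ht
      nlinarith
  have := step2 1 (Set.mem_Icc.2 ⟨zero_le_one, le_refl 1⟩)
  rw [hab] at this
  simpa using this

lemma aux_taylor_lower (f : X → ℝ) (hfd : Differentiable ℝ f)
    (hfd2 : Differentiable ℝ (gradient f)) (C : ℝ)
    (hC : ∀ x v : X, C * ‖v‖ ^ 2 ≤ ⟪(fderiv ℝ (gradient f) x) v, v⟫) (a b : X) :
    f a + ⟪gradient f a, b - a⟫ + C / 2 * ‖b - a‖ ^ 2 ≤ f b := by
  set d := b - a with hd
  have hab : a + (1:ℝ) • d = b := by simp [hd]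
  have step1 : ∀ t ∈ Set.Icc (0:ℝ) 1,
      ⟪gradient f a, d⟫ + C * ‖d‖ ^ 2 * t ≤ ⟪gradient f (a + t • d), d⟫ := by
    apply aux_deriv_compare
    · exact (differentiable_const _).add ((differentiable_id).const_mul _)
    · exact fun t => (aux_hasDerivAt_grad_inner_line f hfd2 a d t).differentiableAt
    · simp
    · intro t ht
      rw [(aux_hasDerivAt_grad_inner_line f hfd2 a d t).deriv]
      have : HasDerivAt (fun t : ℝ => ⟪gradient f a, d⟫ + C * ‖d‖ ^ 2 * t)
          (C * ‖d‖ ^ 2) t := by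
        exact ((hasDerivAt_const t ⟪gradient f a, d⟫).add
          ((hasDerivAt_id t).const_mul (C * ‖d‖ ^ 2))).congr_deriv (by ring)
      rw [this.deriv]
      exact hC _ _
  have step2 : ∀ t ∈ Set.Icc (0:ℝ) 1,
      f a + ⟪gradient f a, d⟫ * t + C / 2 * ‖d‖ ^ 2 * t ^ 2 ≤ f (a + t • d) := by
    apply aux_deriv_compare
    · exact ((differentiable_const _).add ((differentiable_id).const_mul _)).add
        ((differentiable_id.pow 2).const_mul _)
    · exact fun t => (aux_hasDerivAt_comp_line f hfd a d t).differentiableAt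
    · simp
    · intro t ht
      rw [(aux_hasDerivAt_comp_line f hfd a d t).deriv]
      have hq : HasDerivAt (fun t : ℝ =>
          f a + ⟪gradient f a, d⟫ * t + C / 2 * ‖d‖ ^ 2 * t ^ 2)
          (⟪gradient f a, d⟫ + C / 2 * ‖d‖ ^ 2 * (2 * t)) t := by
        have h1 : HasDerivAt (fun t : ℝ => ⟪gradient f a, d⟫ * t) ⟪gradient f a, d⟫ t := by
          simpa using (hasDerivAt_id t).const_mul ⟪gradient f a, d⟫
        have h2 : HasDerivAt (fun t : ℝ => C / 2 * ‖d‖ ^ 2 * t ^ 2)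
            (C / 2 * ‖d‖ ^ 2 * (2 * t)) t := by
          have := (hasDerivAt_pow 2 t).const_mul (C / 2 * ‖d‖ ^ 2); exact this.congr_deriv (by norm_num)
        exact (((hasDerivAt_const t (f a)).add h1).add h2).congr_deriv (by ring)
      rw [hq.deriv]
      have := step1 t ht
      nlinarith
  have := step2 1 (Set.mem_Icc.2 ⟨zero_le_one, le_refl 1⟩)
  rw [hab] at this
  simpa using this
end helpers


section helpers2
variable {X : Type*} [NormedAddCommGroup X] [InnerProductSpace ℝ X] [CompleteSpace X]

lemma aux_smooth_sq (h : X → ℝ) (hhd : Differentiable ℝ h)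
    (hhd2 : Differentiable ℝ (gradient h)) (m M : ℝ) (hm : 0 < m) (hmM : m ≤ M)
    (hhm : ∀ x v : X, m * ‖v‖ ^ 2 ≤ ⟪(fderiv ℝ (gradient h) x) v, v⟫)
    (hhM : ∀ x v : X, ⟪(fderiv ℝ (gradient h) x) v, v⟫ ≤ M * ‖v‖ ^ 2) (a b : X) :
    h a + ⟪gradient h a, b - a⟫ + 1 / (2 * M) * ‖gradient h b - gradient h a‖ ^ 2 ≤ h b := by
  have hM : 0 < M := lt_of_lt_of_le hm hmM
  set Δ := gradient h b - gradient h a with hΔ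
  set z := b - (1 / M) • Δ with hz
  have hB : h a + ⟪gradient h a, z - a⟫ ≤ h z := by
    have := aux_taylor_lower h hhd hhd2 m hhm a z
    nlinarith [sq_nonneg ‖z - a‖]
  have hA : h z ≤ h b + ⟪gradient h b, z - b⟫ + M / 2 * ‖z - b‖ ^ 2 :=
    aux_taylor_upper h hhd hhd2 M hhM b z
  have hzb : z - b = -((1 / M) • Δ) := by rw [hz]; abel
  have hnorm : ‖z - b‖ ^ 2 = (1 / M) ^ 2 * ‖Δ‖ ^ 2 := by
    rw [hzb, norm_neg, norm_smul]
    simp [abs_of_pos (by positivity : (0:ℝ) < 1 / M), mul_pow]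
  have hib : ⟪gradient h b, z - b⟫ = -(1 / M) * ⟪gradient h b, Δ⟫ := by
    rw [hzb, inner_neg_right, real_inner_smul_right]; ring
  have hia : ⟪gradient h a, z - a⟫ = ⟪gradient h a, b - a⟫ - (1 / M) * ⟪gradient h a, Δ⟫ := by
    have : z - a = (b - a) - (1 / M) • Δ := by rw [hz]; abel
    rw [this, inner_sub_right, real_inner_smul_right]
  have hΔΔ : ⟪gradient h b, Δ⟫ - ⟪gradient h a, Δ⟫ = ‖Δ‖ ^ 2 := by
    rw [← inner_sub_left, ← hΔ, real_inner_self_eq_norm_sq]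
  rw [hia] at hB
  rw [hib, hnorm] at hA
  have hM' : (M:ℝ) ≠ 0 := ne_of_gt hM
  have hmul : 1 / M * ⟪gradient h b, Δ⟫ - 1 / M * ⟪gradient h a, Δ⟫ = 1 / M * ‖Δ‖ ^ 2 := by
    rw [← mul_sub, hΔΔ]
  have hc2 : M / 2 * ((1 / M) ^ 2 * ‖Δ‖ ^ 2) = 1 / (2 * M) * ‖Δ‖ ^ 2 := by
    field_simp
  have hc3 : 1 / M * ‖Δ‖ ^ 2 = 2 * (1 / (2 * M) * ‖Δ‖ ^ 2) := by
    field_simp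
  linarith

lemma aux_cocoercive (h : X → ℝ) (hhd : Differentiable ℝ h)
    (hhd2 : Differentiable ℝ (gradient h)) (m M : ℝ) (hm : 0 < m) (hmM : m ≤ M)
    (hhm : ∀ x v : X, m * ‖v‖ ^ 2 ≤ ⟪(fderiv ℝ (gradient h) x) v, v⟫)
    (hhM : ∀ x v : X, ⟪(fderiv ℝ (gradient h) x) v, v⟫ ≤ M * ‖v‖ ^ 2) (a b : X) :
    1 / M * ‖gradient h b - gradient h a‖ ^ 2 ≤ ⟪gradient h b - gradient h a, b - a⟫ := by
  have h1 := aux_smooth_sq h hhd hhd2 m M hm hmM hhm hhM a b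
  have h2 := aux_smooth_sq h hhd hhd2 m M hm hmM hhm hhM b a
  have e1 : gradient h a - gradient h b = -(gradient h b - gradient h a) := by abel
  rw [e1, norm_neg] at h2
  have e2 : ⟪gradient h b, a - b⟫ = -⟪gradient h b, b - a⟫ := by
    rw [← inner_neg_right]; congr 1; abel
  rw [e2] at h2
  have e3 : ⟪gradient h b - gradient h a, b - a⟫ =
      ⟪gradient h b, b - a⟫ - ⟪gradient h a, b - a⟫ := inner_sub_left _ _ _
  have hM : 0 < M := lt_of_lt_of_le hm hmM
  have hc3 : 1 / M * ‖gradient h b - gradient h a‖ ^ 2 =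
      2 * (1 / (2 * M) * ‖gradient h b - gradient h a‖ ^ 2) := by
    field_simp
  linarith

end helpers2

section opt
variable {X : Type*} [NormedAddCommGroup X] [InnerProductSpace ℝ X] [CompleteSpace X]

lemma aux_fderiv_eq_inner_gradient' (f : X → ℝ) {x : X} (hfd : DifferentiableAt ℝ f x) (v : X) :
    fderiv ℝ f x v = ⟪gradient f x, v⟫ := by
  rw [hfd.hasGradientAt.hasFDerivAt.fderiv]
  simp [InnerProductSpace.toDual]

lemma aux_opt_condition (f h : X → ℝ) (hfd : Differentiable ℝ f) (hhd : Differentiable ℝ h)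
    (η : ℝ) (hη : 0 < η) (xk x1 : X)
    (hopt : ∀ z : X, ⟪gradient f xk, x1⟫ + (1 / η) * bregmanDiv h x1 xk ≤
      ⟪gradient f xk, z⟫ + (1 / η) * bregmanDiv h z xk) :
    gradient h x1 - gradient h xk = -η • gradient f xk := by
  set g := gradient f xk with hg
  set φ : X → ℝ := fun z => ⟪g, z⟫ + (1 / η) * (h z - h xk - ⟪gradient h xk, z - xk⟫) with hφ
  have hinner : Differentiable ℝ fun z : X => ⟪g, z⟫ := by
    simpa using (innerSL ℝ g).differentiable
  have hinner2 : Differentiable ℝ fun z : X => ⟪gradient h xk, z - xk⟫ := by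
    have : Differentiable ℝ fun z : X => ⟪gradient h xk, z⟫ := by
      simpa using (innerSL ℝ (gradient h xk)).differentiable
    simpa [inner_sub_right] using this.sub_const ⟪gradient h xk, xk⟫
  have hφd : Differentiable ℝ φ :=
    hinner.add ((((hhd.sub_const (h xk)).sub hinner2)).const_mul (1 / η))
  have hmin : IsLocalMin φ x1 := Filter.Eventually.of_forall fun z => hopt z
  have hf0 : fderiv ℝ φ x1 = 0 := hmin.fderiv_eq_zero
  -- compute fderiv φ x1 v
  have key : ∀ v : X, ⟪g, v⟫ + (1 / η) * (⟪gradient h x1, v⟫ - ⟪gradient h xk, v⟫) = 0 := by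
    intro v
    have h1 : HasFDerivAt (fun z : X => ⟪g, z⟫) (innerSL ℝ g) x1 := by
      simpa using (innerSL ℝ g).hasFDerivAt
    have h2 : HasFDerivAt h (fderiv ℝ h x1) x1 := (hhd x1).hasFDerivAt
    have h3 : HasFDerivAt (fun z : X => ⟪gradient h xk, z - xk⟫)
        (innerSL ℝ (gradient h xk)) x1 := by
      have h3' : HasFDerivAt (fun z : X => ⟪gradient h xk, z⟫)
          (innerSL ℝ (gradient h xk)) x1 := by
        simpa using (innerSL ℝ (gradient h xk)).hasFDerivAt
      have := h3'.sub_const ⟪gradient h xk, xk⟫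
      refine this.congr_of_eventuallyEq (Filter.Eventually.of_forall fun z => ?_)
      exact inner_sub_right _ _ _
    have hφ' : HasFDerivAt φ
        (innerSL ℝ g + (1 / η) • (fderiv ℝ h x1 - innerSL ℝ (gradient h xk))) x1 := by
      exact h1.add (((h2.sub_const (h xk)).sub h3).const_smul (1 / η))
    have := hφ'.fderiv
    rw [hf0] at this
    have happ := congrFun (congrArg (fun L : X →L[ℝ] ℝ => (L : X → ℝ)) this.symm) v
    simp only [ContinuousLinearMap.add_apply, ContinuousLinearMap.smul_apply,
      ContinuousLinearMap.sub_apply, ContinuousLinearMap.zero_apply, innerSL_apply_apply,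
      smul_eq_mul] at happ
    rw [aux_fderiv_eq_inner_gradient' h (hhd x1)] at happ
    linarith [happ]
  have key2 : ∀ v : X, ⟪gradient h x1 - gradient h xk + η • g, v⟫ = 0 := by
    intro v
    have := key v
    rw [inner_add_left, inner_sub_left, real_inner_smul_left]
    have hk := key v
    field_simp at hk
    linarith
  have : gradient h x1 - gradient h xk + η • g = 0 := by
    have := key2 (gradient h x1 - gradient h xk + η • g)
    rwa [real_inner_self_eq_norm_sq, pow_eq_zero_iff (by norm_num), norm_eq_zero] at this
  rw [neg_smul]
  exact eq_neg_of_add_eq_zero_left this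
end opt


set_option maxHeartbeats 1000000 in
theorem mirror_descent_progress
    {X : Type*} [NormedAddCommGroup X] [InnerProductSpace ℝ X] [FiniteDimensional ℝ X]
    (f h : X → ℝ)
    (hfd : Differentiable ℝ f) (hconv : ConvexOn ℝ Set.univ f)
    (hfd2 : Differentiable ℝ (gradient f))
    (hhd : Differentiable ℝ h) (hhd2 : Differentiable ℝ (gradient h))
    (L m M η : ℝ) (hL : 0 < L) (hm : 0 < m) (hmM : m ≤ M)
    (hfL : ∀ x v : X, |⟪(fderiv ℝ (gradient f) x) v, v⟫| ≤ L * ‖v‖ ^ 2)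
    (hhm : ∀ x v : X, m * ‖v‖ ^ 2 ≤ ⟪(fderiv ℝ (gradient h) x) v, v⟫)
    (hhM : ∀ x v : X, ⟪(fderiv ℝ (gradient h) x) v, v⟫ ≤ M * ‖v‖ ^ 2)
    (hη : 0 < η) (hη' : η ≤ m ^ 2 / (M * L))
    (xk x1 : X)
    (hopt : ∀ z : X, ⟪gradient f xk, x1⟫ + (1 / η) * bregmanDiv h x1 xk ≤
      ⟪gradient f xk, z⟫ + (1 / η) * bregmanDiv h z xk) :
    f x1 - f xk ≤ -(η / (2 * M)) * ‖gradient f xk‖ ^ 2 := by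
  have hM : 0 < M := lt_of_lt_of_le hm hmM
  set g := gradient f xk with hg
  set d := x1 - xk with hd
  have hkey : gradient h x1 - gradient h xk = -η • g :=
    aux_opt_condition f h hfd hhd η hη xk x1 hopt
  have hfL' : ∀ x v : X, ⟪(fderiv ℝ (gradient f) x) v, v⟫ ≤ L * ‖v‖ ^ 2 :=
    fun x v => le_trans (le_abs_self _) (hfL x v)
  have hdesc : f x1 ≤ f xk + ⟪g, d⟫ + L / 2 * ‖d‖ ^ 2 := by
    simpa [← hg, ← hd] using aux_taylor_upper f hfd hfd2 L hfL' xk x1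
  -- strong monotonicity of ∇h
  have l1 := aux_taylor_lower h hhd hhd2 m hhm xk x1
  have l2 := aux_taylor_lower h hhd hhd2 m hhm x1 xk
  have hmono : m * ‖d‖ ^ 2 ≤ ⟪gradient h x1 - gradient h xk, d⟫ := by
    have e1 : ‖xk - x1‖ = ‖d‖ := by rw [hd, norm_sub_rev]
    have e2 : ⟪gradient h x1, xk - x1⟫ = -⟪gradient h x1, d⟫ := by
      rw [← inner_neg_right]; congr 1; rw [hd]; abel
    have e3 : ⟪gradient h x1 - gradient h xk, d⟫ =
        ⟪gradient h x1, d⟫ - ⟪gradient h xk, d⟫ := inner_sub_left _ _ _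
    rw [e1, e2] at l2
    rw [← hd] at l1
    linarith
  have hcoco := aux_cocoercive h hhd hhd2 m M hm hmM hhm hhM xk x1
  rw [← hd] at hcoco
  -- substitute the optimality identity
  have hΔd : ⟪gradient h x1 - gradient h xk, d⟫ = -η * ⟪g, d⟫ := by
    rw [hkey, real_inner_smul_left]
  have hΔn : ‖gradient h x1 - gradient h xk‖ ^ 2 = η ^ 2 * ‖g‖ ^ 2 := by
    rw [hkey, norm_smul]
    simp [abs_of_pos hη, mul_pow]
  rw [hΔd] at hmono hcoco
  rw [hΔn] at hcoco
  set s := ⟪g, d⟫ with hs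
  set G := ‖g‖ ^ 2 with hG
  have hGnn : 0 ≤ G := by positivity
  -- s ≤ -(η/M) * G
  have hb : η * G ≤ M * (-s) := by
    have h1 : η * (η * G) ≤ η * (M * (-s)) := by
      have : 1 / M * (η ^ 2 * G) = η * (η * G) / M := by ring
      rw [this] at hcoco
      have := (div_le_iff₀ hM).mp hcoco
      nlinarith
    exact le_of_mul_le_mul_left h1 hη
  have hsnp : s ≤ 0 := by nlinarith
  -- η L ≤ m
  have hηML : η * (M * L) ≤ m ^ 2 := (le_div_iff₀ (by positivity)).mp hη'
  have hηL : η * L ≤ m := by nlinarith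
  -- combine
  have hDd : L / 2 * ‖d‖ ^ 2 ≤ L * η / (2 * m) * (-s) := by
    have h1 : m * ‖d‖ ^ 2 ≤ η * (-s) := by linarith
    have h2 := mul_le_mul_of_nonneg_left h1 (by positivity : (0:ℝ) ≤ L / (2 * m))
    calc L / 2 * ‖d‖ ^ 2 = L / (2 * m) * (m * ‖d‖ ^ 2) := by field_simp
      _ ≤ L / (2 * m) * (η * (-s)) := h2
      _ = L * η / (2 * m) * (-s) := by ring
  have hfinal : f x1 - f xk ≤ s / 2 := by
    have h2 : s + L * η / (2 * m) * (-s) ≤ s / 2 := by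
      have hc : L * η / (2 * m) ≤ 1 / 2 := by
        rw [div_le_div_iff₀ (by positivity) (by norm_num)]
        nlinarith
      nlinarith
    linarith
  have hg2 : s / 2 ≤ -(η / (2 * M)) * G := by
    rw [neg_mul, le_neg, div_mul_eq_mul_div, div_le_iff₀ (by positivity : (0:ℝ) < 2 * M)]
    linarith
  linarith
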